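/- Let X and Y be independent random variables with X ~ N(1,1) and Y ~ N(0,1), and let Z = XY. Suppose a_{0,j}, a_{1,j} ∈ ℝ for j = 0,1,2,3 are such that E[∑_{j=0}^{3}(a_{0,j}+a_{1,j}Z)·f^{(j)}(Z)] = 0 for every polynomial f (equivalently, for f(x) = x^k, k = 0,1,…,7), where f^{(0)} = f. Then a_{0,j} = a_{1,j} = 0 for all j = 0,1,2,3. In other words, there is no nonzero third-order Stein operator with linear coefficients for the product of an N(1,1) random variable and an independent N(0,1) random variable. -/

import Mathlib

open MeasureTheory ProbabilityTheory Real Filter Finset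

lemma aux_iteratedDeriv_pow (k j : ℕ) :
    iteratedDeriv j (fun x : ℝ => x ^ k) = fun x => (k.descFactorial j : ℝ) * x ^ (k - j) := by
  induction j with
  | zero => simp
  | succ j ih =>
      rw [iteratedDeriv_succ, ih]
      funext x
      have : deriv (fun x : ℝ => (k.descFactorial j : ℝ) * x ^ (k - j)) x
          = (k.descFactorial j : ℝ) * ((k - j : ℕ) * x ^ (k - j - 1)) := by
        simp [deriv_const_mul, deriv_pow]
      rw [this, Nat.descFactorial_succ, Nat.sub_sub]
      push_cast
      ring

lemma aux_tendsto_top (n : ℕ) :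
    Tendsto (fun x : ℝ => x ^ n * rexp (-x ^ 2 / 2)) atTop (nhds 0) := by
  have h := rpow_mul_exp_neg_mul_sq_isLittleO_exp_neg (b := 1/2) (by norm_num) (n : ℝ)
  have h2 : (fun x : ℝ => x ^ n * rexp (-x ^ 2 / 2)) =o[atTop] fun x => rexp (-(1/2) * x) := by
    refine h.congr' ?_ (Filter.EventuallyEq.refl _ _)
    filter_upwards with x
    rw [Real.rpow_natCast]
    ring_nf
  have h3 : Tendsto (fun x : ℝ => rexp (-(1/2) * x)) atTop (nhds 0) := by
    apply Real.tendsto_exp_atBot.comp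
    exact (tendsto_id (α := ℝ)).const_mul_atTop_of_neg (by norm_num : (-(1/2) : ℝ) < 0)
  exact h2.trans_tendsto h3

lemma aux_tendsto_bot (n : ℕ) :
    Tendsto (fun x : ℝ => x ^ n * rexp (-x ^ 2 / 2)) atBot (nhds 0) := by
  have h := (aux_tendsto_top n).comp tendsto_neg_atBot_atTop
  have h2 : Tendsto (fun x : ℝ => (-x) ^ n * rexp (-x ^ 2 / 2)) atBot (nhds 0) := by
    refine h.congr fun x => ?_
    simp [neg_sq]
  have h3 : Tendsto (fun x : ℝ => ((-1 : ℝ)) ^ n * ((-x) ^ n * rexp (-x ^ 2 / 2))) atBot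
      (nhds 0) := by simpa using h2.const_mul (((-1 : ℝ)) ^ n)
  refine h3.congr fun x => ?_
  rw [← mul_assoc, ← mul_pow]
  ring_nf

lemma aux_integrable (n : ℕ) :
    Integrable (fun x : ℝ => x ^ n * rexp (-x ^ 2 / 2)) := by
  have hg : Integrable (fun x : ℝ => (n.factorial * rexp 1) * rexp (-(4⁻¹ : ℝ) * x ^ 2)) :=
    (integrable_exp_neg_mul_sq (by norm_num)).const_mul _
  refine hg.mono' ?_ ?_
  · exact ((continuous_pow n).mul (Continuous.rexp (by continuity))).aestronglyMeasurable
  · filter_upwards with x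
    have h1 : |x| ^ n ≤ n.factorial * rexp |x| := by
      have := Real.sum_le_exp_of_nonneg (abs_nonneg x) (n + 1)
      have h2 : |x| ^ n / n.factorial ≤ rexp |x| := by
        refine le_trans ?_ this
        exact Finset.single_le_sum (f := fun i => |x| ^ i / i.factorial)
          (fun i _ => by positivity) (Finset.self_mem_range_succ n)
      calc |x| ^ n = (|x| ^ n / n.factorial) * n.factorial := by
            field_simp
        _ ≤ rexp |x| * n.factorial := by
            apply mul_le_mul_of_nonneg_right h2 (by positivity)
        _ = n.factorial * rexp |x| := by ring
    have h3 : rexp |x| ≤ rexp 1 * rexp (x ^ 2 / 4) := by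
      rw [← Real.exp_add]
      apply Real.exp_le_exp.2
      nlinarith [sq_nonneg (|x| / 2 - 1), sq_abs x]
    calc ‖x ^ n * rexp (-x ^ 2 / 2)‖ = |x| ^ n * rexp (-x ^ 2 / 2) := by
          rw [norm_mul, norm_pow, Real.norm_eq_abs, Real.norm_eq_abs,
            abs_of_pos (Real.exp_pos _)]
      _ ≤ (n.factorial * (rexp 1 * rexp (x ^ 2 / 4))) * rexp (-x ^ 2 / 2) := by
          refine mul_le_mul_of_nonneg_right ?_ (Real.exp_pos _).le
          exact h1.trans (mul_le_mul_of_nonneg_left h3 (by positivity))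
      _ = (n.factorial * rexp 1) * rexp (-(4⁻¹ : ℝ) * x ^ 2) := by
          rw [mul_assoc, mul_assoc, ← Real.exp_add]
          ring_nf

lemma aux_integral_deriv_zero (f f' : ℝ → ℝ) (hd : ∀ x, HasDerivAt f (f' x) x)
    (hi : Integrable f') (ht : Tendsto f atTop (nhds 0)) (hb : Tendsto f atBot (nhds 0)) :
    ∫ x : ℝ, f' x = 0 := by
  have h1 : ∫ x in Set.Iic (0:ℝ), f' x = f 0 - 0 :=
    integral_Iic_of_hasDerivAt_of_tendsto (hd 0).continuousAt.continuousWithinAt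
      (fun x _ => hd x) hi.integrableOn hb
  have h2 : ∫ x in Set.Ioi (0:ℝ), f' x = 0 - f 0 :=
    integral_Ioi_of_hasDerivAt_of_tendsto (hd 0).continuousAt.continuousWithinAt
      (fun x _ => hd x) hi.integrableOn ht
  rw [← intervalIntegral.integral_Iic_add_Ioi (b := (0:ℝ)) hi.integrableOn hi.integrableOn, h1, h2]
  ring

lemma aux_hasDeriv_exp (x : ℝ) :
    HasDerivAt (fun x : ℝ => rexp (-x ^ 2 / 2)) (-x * rexp (-x ^ 2 / 2)) x := by
  have h : HasDerivAt (fun x : ℝ => -x ^ 2 / 2) (-x) x := by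
    have := ((hasDerivAt_pow 2 x).neg).div_const 2
    refine this.congr_deriv ?_
    push_cast
    ring
  simpa [mul_comm] using h.exp

lemma aux_K1 : ∫ x : ℝ, x ^ 1 * rexp (-x ^ 2 / 2) = 0 := by
  apply aux_integral_deriv_zero (fun x => -rexp (-x ^ 2 / 2))
  · intro x
    have := (aux_hasDeriv_exp x).neg
    refine this.congr_deriv ?_
    ring
  · exact aux_integrable 1
  · simpa using (aux_tendsto_top 0).neg
  · simpa using (aux_tendsto_bot 0).neg

lemma aux_Krec (n : ℕ) : ∫ x : ℝ, x ^ (n + 2) * rexp (-x ^ 2 / 2)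
    = (n + 1 : ℝ) * ∫ x : ℝ, x ^ n * rexp (-x ^ 2 / 2) := by
  have key : ∫ x : ℝ, ((n + 1 : ℝ) * (x ^ n * rexp (-x ^ 2 / 2))
      - x ^ (n + 2) * rexp (-x ^ 2 / 2)) = 0 := by
    apply aux_integral_deriv_zero (fun x => x ^ (n + 1) * rexp (-x ^ 2 / 2))
    · intro x
      have h1 : HasDerivAt (fun x : ℝ => x ^ (n + 1)) ((n + 1 : ℝ) * x ^ n) x := by
        simpa using hasDerivAt_pow (n + 1) x
      have := h1.mul (aux_hasDeriv_exp x)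
      refine this.congr_deriv ?_
      ring
    · exact ((aux_integrable n).const_mul _).sub (aux_integrable (n + 2))
    · simpa using aux_tendsto_top (n + 1)
    · simpa using aux_tendsto_bot (n + 1)
  have hsplit := integral_sub ((aux_integrable n).const_mul ((n + 1 : ℝ)))
    (aux_integrable (n + 2))
  rw [key] at hsplit
  rw [integral_const_mul] at hsplit
  linarith

lemma aux_K0 : ∫ x : ℝ, x ^ 0 * rexp (-x ^ 2 / 2) = Real.sqrt (2 * Real.pi) := by
  have := integral_gaussian (1/2)
  simp only [pow_zero, one_mul]
  rw [show (fun x : ℝ => rexp (-x ^ 2 / 2)) = fun x : ℝ => rexp (-(1/2) * x ^ 2) by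
    funext x; ring_nf]
  rw [this]
  rw [div_div_eq_mul_div, div_one, mul_comm]

noncomputable def Kk (n : ℕ) : ℝ := ∫ x : ℝ, x ^ n * rexp (-x ^ 2 / 2)

lemma Kk0 : Kk 0 = Real.sqrt (2 * Real.pi) := aux_K0
lemma Kk1 : Kk 1 = 0 := aux_K1
lemma Kkrec (n : ℕ) : Kk (n + 2) = (n + 1 : ℝ) * Kk n := aux_Krec n
lemma Kk2 : Kk 2 = Real.sqrt (2 * Real.pi) := by rw [show (2:ℕ) = 0 + 2 from rfl, Kkrec, Kk0]; norm_num
lemma Kk3 : Kk 3 = 0 := by rw [show (3:ℕ) = 1 + 2 from rfl, Kkrec, Kk1]; norm_num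
lemma Kk4 : Kk 4 = 3 * Real.sqrt (2 * Real.pi) := by rw [show (4:ℕ) = 2 + 2 from rfl, Kkrec, Kk2]; norm_num
lemma Kk5 : Kk 5 = 0 := by rw [show (5:ℕ) = 3 + 2 from rfl, Kkrec, Kk3]; norm_num
lemma Kk6 : Kk 6 = 15 * Real.sqrt (2 * Real.pi) := by rw [show (6:ℕ) = 4 + 2 from rfl, Kkrec, Kk4]; push_cast; ring
lemma Kk7 : Kk 7 = 0 := by rw [show (7:ℕ) = 5 + 2 from rfl, Kkrec, Kk5]; norm_num
lemma Kk8 : Kk 8 = 105 * Real.sqrt (2 * Real.pi) := by rw [show (8:ℕ) = 6 + 2 from rfl, Kkrec, Kk6]; push_cast; ring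

lemma aux_pdf01 (x : ℝ) : gaussianPDFReal 0 1 x = (Real.sqrt (2 * Real.pi))⁻¹ * rexp (-x ^ 2 / 2) := by
  simp [gaussianPDFReal]

lemma aux_gauss0_withDensity : gaussianReal 0 1
    = MeasureTheory.volume.withDensity (fun x => ((gaussianPDFReal 0 1 x).toNNReal : ENNReal)) := by
  rw [gaussianReal_of_var_ne_zero 0 one_ne_zero]
  rfl

lemma integrable_pow_gauss0 (n : ℕ) : Integrable (fun x : ℝ => x ^ n) (gaussianReal 0 1) := by
  rw [aux_gauss0_withDensity, integrable_withDensity_iff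
    ((measurable_gaussianPDFReal 0 1).real_toNNReal.coe_nnreal_ennreal)
    (Filter.Eventually.of_forall fun x => ENNReal.coe_lt_top)]
  have : Integrable (fun x : ℝ => (Real.sqrt (2 * Real.pi))⁻¹ * (x ^ n * rexp (-x ^ 2 / 2))) :=
    (aux_integrable n).const_mul _
  refine this.congr (Filter.Eventually.of_forall fun x => ?_)
  show _ = x ^ n * ((((gaussianPDFReal 0 1 x).toNNReal : ENNReal)).toReal)
  rw [ENNReal.coe_toReal, Real.coe_toNNReal _ (gaussianPDFReal_nonneg 0 1 x), aux_pdf01]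
  ring

lemma moment_gauss0 (n : ℕ) :
    ∫ x : ℝ, x ^ n ∂(gaussianReal 0 1) = (Real.sqrt (2 * Real.pi))⁻¹ * Kk n := by
  rw [aux_gauss0_withDensity,
    integral_withDensity_eq_integral_smul
      ((measurable_gaussianPDFReal 0 1).real_toNNReal) (fun x : ℝ => x ^ n)]
  rw [show (fun x : ℝ => (gaussianPDFReal 0 1 x).toNNReal • x ^ n)
      = fun x : ℝ => (Real.sqrt (2 * Real.pi))⁻¹ * (x ^ n * rexp (-x ^ 2 / 2)) by
    funext x
    rw [NNReal.smul_def, smul_eq_mul, Real.coe_toNNReal _ (gaussianPDFReal_nonneg 0 1 x),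
      aux_pdf01]
    ring]
  rw [integral_const_mul]
  rfl

lemma aux_map01 : (gaussianReal 0 1).map (· + 1) = gaussianReal 1 1 := by
  simpa using gaussianReal_map_add_const (μ := 0) (v := 1) 1

lemma aux_add_pow (x : ℝ) (n : ℕ) :
    (x + 1) ^ n = ∑ i ∈ Finset.range (n + 1), (n.choose i : ℝ) * x ^ i := by
  rw [add_pow]
  refine Finset.sum_congr rfl fun i _ => by ring

lemma integrable_pow_gauss1 (n : ℕ) : Integrable (fun x : ℝ => x ^ n) (gaussianReal 1 1) := by
  rw [← aux_map01, integrable_map_measure (by fun_prop) (by fun_prop)]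
  have : Integrable (fun x : ℝ => ∑ i ∈ Finset.range (n + 1), (n.choose i : ℝ) * x ^ i)
      (gaussianReal 0 1) :=
    integrable_finset_sum _ fun i _ => (integrable_pow_gauss0 i).const_mul _
  exact this.congr (Filter.Eventually.of_forall fun x => (aux_add_pow x n).symm)

lemma moment_gauss1 (n : ℕ) : ∫ x : ℝ, x ^ n ∂(gaussianReal 1 1)
    = ∑ i ∈ Finset.range (n + 1), (n.choose i : ℝ) * ((Real.sqrt (2 * Real.pi))⁻¹ * Kk i) := by
  rw [← aux_map01, integral_map (by fun_prop) (by fun_prop)]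
  calc ∫ x : ℝ, (x + 1) ^ n ∂(gaussianReal 0 1)
      = ∫ x : ℝ, ∑ i ∈ Finset.range (n + 1), (n.choose i : ℝ) * x ^ i ∂(gaussianReal 0 1) := by
        congr 1
        funext x
        exact aux_add_pow x n
    _ = ∑ i ∈ Finset.range (n + 1), (n.choose i : ℝ) * ∫ x : ℝ, x ^ i ∂(gaussianReal 0 1) := by
        rw [integral_finset_sum _ fun i _ => (integrable_pow_gauss0 i).const_mul _]
        exact Finset.sum_congr rfl fun i _ => integral_const_mul _ _
    _ = _ := Finset.sum_congr rfl fun i _ => by rw [moment_gauss0]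

lemma aux_sqrt_ne : Real.sqrt (2 * Real.pi) ≠ 0 :=
  ne_of_gt (Real.sqrt_pos.2 (by positivity))

lemma aux_invmul (c : ℝ) :
    (Real.sqrt (2 * Real.pi))⁻¹ * (c * Real.sqrt (2 * Real.pi)) = c := by
  rw [mul_comm c, ← mul_assoc, inv_mul_cancel₀ aux_sqrt_ne, one_mul]

lemma aux_invmul' : (Real.sqrt (2 * Real.pi))⁻¹ * Real.sqrt (2 * Real.pi) = 1 :=
  inv_mul_cancel₀ aux_sqrt_ne

lemma mY : ∀ n, n ≤ 8 → ∫ x : ℝ, x ^ n ∂(gaussianReal 0 1) = [1,0,1,0,3,0,15,0,105].getD n 0 := by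
  intro n hn
  interval_cases n <;> rw [moment_gauss0] <;>
    simp only [Kk0, Kk1, Kk2, Kk3, Kk4, Kk5, Kk6, Kk7, Kk8, aux_invmul, aux_invmul',
      mul_zero] <;>
    norm_num

lemma mX : ∀ n, n ≤ 8 → ∫ x : ℝ, x ^ n ∂(gaussianReal 1 1) = [1,1,2,4,10,26,76,232,764].getD n 0 := by
  intro n hn
  interval_cases n <;> rw [moment_gauss1] <;>
    simp only [Finset.sum_range_succ, Finset.sum_range_zero, Kk0, Kk1, Kk2, Kk3, Kk4, Kk5,
      Kk6, Kk7, Kk8, aux_invmul, aux_invmul', mul_zero, mul_one, zero_add, add_zero] <;>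
    norm_num [Nat.choose]

lemma aux_integral_poly {Ω : Type*} [MeasurableSpace Ω] (P : Measure Ω) (Z : Ω → ℝ)
    (hint : ∀ n : ℕ, Integrable (fun ω => Z ω ^ n) P) (c : ℕ → ℝ) (N : ℕ) :
    ∫ ω, ∑ m ∈ Finset.range N, c m * Z ω ^ m ∂P
      = ∑ m ∈ Finset.range N, c m * ∫ ω, Z ω ^ m ∂P := by
  rw [integral_finset_sum _ fun m _ => (hint m).const_mul _]
  exact Finset.sum_congr rfl fun m _ => integral_const_mul _ _


/-- There is no nonzero third-order Stein operator with linear coefficients for the product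
`Z = XY` of independent random variables `X ∼ N(1,1)` and `Y ∼ N(0,1)`: if
`E[∑_{j=0}^{3} (a₀ⱼ + a₁ⱼ Z) f⁽ʲ⁾(Z)] = 0` for the monomials `f(x) = xᵏ`, `k = 0,1,…,7`,
then all the coefficients `a₀ⱼ, a₁ⱼ` vanish. -/
theorem no_third_order_stein_operator
    {Ω : Type*} [MeasurableSpace Ω] (P : Measure Ω) [IsProbabilityMeasure P]
    (X Y : Ω → ℝ) (hX : Measurable X) (hY : Measurable Y)
    (hXY : IndepFun X Y P)
    (hXlaw : Measure.map X P = gaussianReal 1 1)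
    (hYlaw : Measure.map Y P = gaussianReal 0 1)
    (a₀ a₁ : Fin 4 → ℝ)
    (h : ∀ k : ℕ, k ≤ 7 →
      ∫ ω, ∑ j : Fin 4,
        (a₀ j + a₁ j * (X ω * Y ω))
          * iteratedDeriv (j : ℕ) (fun x : ℝ => x ^ k) (X ω * Y ω) ∂P = 0) :
    ∀ j : Fin 4, a₀ j = 0 ∧ a₁ j = 0 := by
  have hXn : ∀ n : ℕ, Integrable (fun ω => X ω ^ n) P := by
    intro n
    have h1 : Integrable (fun x : ℝ => x ^ n) (Measure.map X P) := by
      rw [hXlaw]; exact integrable_pow_gauss1 n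
    exact (integrable_map_measure (measurable_id.pow_const n).aestronglyMeasurable
      hX.aemeasurable).mp h1
  have hYn : ∀ n : ℕ, Integrable (fun ω => Y ω ^ n) P := by
    intro n
    have h1 : Integrable (fun x : ℝ => x ^ n) (Measure.map Y P) := by
      rw [hYlaw]; exact integrable_pow_gauss0 n
    exact (integrable_map_measure (measurable_id.pow_const n).aestronglyMeasurable
      hY.aemeasurable).mp h1
  have hind : ∀ n : ℕ, IndepFun (fun ω => X ω ^ n) (fun ω => Y ω ^ n) P := fun n =>
    hXY.comp (measurable_id.pow_const n) (measurable_id.pow_const n)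
  have hIZ : ∀ n : ℕ, Integrable (fun ω => (X ω * Y ω) ^ n) P := by
    intro n
    have := (hind n).integrable_mul (hXn n) (hYn n)
    exact this.congr (Filter.Eventually.of_forall fun ω => (mul_pow _ _ _).symm)
  have hMZ : ∀ n : ℕ, n ≤ 8 → ∫ ω, (X ω * Y ω) ^ n ∂P
      = [1,0,2,0,30,0,1140,0,80220].getD n 0 := by
    intro n hn
    have h1 : ∫ ω, (X ω * Y ω) ^ n ∂P = ∫ ω, X ω ^ n * Y ω ^ n ∂P := by
      congr 1; funext ω; rw [mul_pow]
    have h2 : ∫ ω, X ω ^ n * Y ω ^ n ∂P = (∫ ω, X ω ^ n ∂P) * ∫ ω, Y ω ^ n ∂P :=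
      (hind n).integral_fun_mul_eq_mul_integral (hXn n).aestronglyMeasurable (hYn n).aestronglyMeasurable
    have h3 : ∫ ω, X ω ^ n ∂P = [1,1,2,4,10,26,76,232,764].getD n 0 := by
      rw [← mX n hn, ← hXlaw, integral_map (f := fun x : ℝ => x ^ n) hX.aemeasurable
        ((measurable_id.pow_const n).aestronglyMeasurable :
          AEStronglyMeasurable (fun x : ℝ => x ^ n) _)]
    have h4 : ∫ ω, Y ω ^ n ∂P = [1,0,1,0,3,0,15,0,105].getD n 0 := by
      rw [← mY n hn, ← hYlaw, integral_map (f := fun x : ℝ => x ^ n) hY.aemeasurable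
        ((measurable_id.pow_const n).aestronglyMeasurable :
          AEStronglyMeasurable (fun x : ℝ => x ^ n) _)]
    rw [h1, h2, h3, h4]
    interval_cases n <;> try norm_num
  have hM0 : ∫ ω, (X ω * Y ω) ^ 0 ∂P = 1 := by
    simpa using hMZ 0 (by norm_num)
  have hM1 : ∫ ω, (X ω * Y ω) ^ 1 ∂P = 0 := by
    simpa using hMZ 1 (by norm_num)
  have hM2 : ∫ ω, (X ω * Y ω) ^ 2 ∂P = 2 := by
    simpa using hMZ 2 (by norm_num)
  have hM3 : ∫ ω, (X ω * Y ω) ^ 3 ∂P = 0 := by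
    simpa using hMZ 3 (by norm_num)
  have hM4 : ∫ ω, (X ω * Y ω) ^ 4 ∂P = 30 := by
    simpa using hMZ 4 (by norm_num)
  have hM5 : ∫ ω, (X ω * Y ω) ^ 5 ∂P = 0 := by
    simpa using hMZ 5 (by norm_num)
  have hM6 : ∫ ω, (X ω * Y ω) ^ 6 ∂P = 1140 := by
    simpa using hMZ 6 (by norm_num)
  have hM7 : ∫ ω, (X ω * Y ω) ^ 7 ∂P = 0 := by
    simpa using hMZ 7 (by norm_num)
  have hM8 : ∫ ω, (X ω * Y ω) ^ 8 ∂P = 80220 := by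
    simpa using hMZ 8 (by norm_num)
  have e0 : ∑ m ∈ Finset.range 9,
      (fun m : ℕ => (if m = 0 then (1 * a₀ 0) else (if m = 1 then (1 * a₁ 0) else (if m = 2 then (0) else (if m = 3 then (0) else (if m = 4 then (0) else (if m = 5 then (0) else (if m = 6 then (0) else (if m = 7 then (0) else (0)))))))))) m * (∫ ω, (X ω * Y ω) ^ m ∂P) = 0 := by
    rw [← aux_integral_poly P (fun ω => X ω * Y ω) hIZ _ 9]
    rw [show (fun ω => ∑ m ∈ Finset.range 9,
        (fun m : ℕ => (if m = 0 then (1 * a₀ 0) else (if m = 1 then (1 * a₁ 0) else (if m = 2 then (0) else (if m = 3 then (0) else (if m = 4 then (0) else (if m = 5 then (0) else (if m = 6 then (0) else (if m = 7 then (0) else (0)))))))))) m * (X ω * Y ω) ^ m)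
        = fun ω => ∑ j : Fin 4, (a₀ j + a₁ j * (X ω * Y ω))
          * iteratedDeriv (j : ℕ) (fun x : ℝ => x ^ 0) (X ω * Y ω) from funext fun ω => by
      simp only [Fin.sum_univ_four, show ((0 : Fin 4) : ℕ) = 0 from rfl, show ((1 : Fin 4) : ℕ) = 1 from rfl, show ((2 : Fin 4) : ℕ) = 2 from rfl, show ((3 : Fin 4) : ℕ) = 3 from rfl, aux_iteratedDeriv_pow,
        Finset.sum_range_succ, Finset.sum_range_zero]
      norm_num [show Nat.descFactorial 0 0 = 1 from rfl, show Nat.descFactorial 0 1 = 0 from rfl, show Nat.descFactorial 0 2 = 0 from rfl, show Nat.descFactorial 0 3 = 0 from rfl]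
      try ring]
    exact h 0 (by norm_num)
  simp only [Finset.sum_range_succ, Finset.sum_range_zero,
    hM0, hM1, hM2, hM3, hM4, hM5, hM6, hM7, hM8] at e0
  norm_num at e0
  have e1 : ∑ m ∈ Finset.range 9,
      (fun m : ℕ => (if m = 0 then (1 * a₀ 1) else (if m = 1 then (1 * a₀ 0 + 1 * a₁ 1) else (if m = 2 then (1 * a₁ 0) else (if m = 3 then (0) else (if m = 4 then (0) else (if m = 5 then (0) else (if m = 6 then (0) else (if m = 7 then (0) else (0)))))))))) m * (∫ ω, (X ω * Y ω) ^ m ∂P) = 0 := by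
    rw [← aux_integral_poly P (fun ω => X ω * Y ω) hIZ _ 9]
    rw [show (fun ω => ∑ m ∈ Finset.range 9,
        (fun m : ℕ => (if m = 0 then (1 * a₀ 1) else (if m = 1 then (1 * a₀ 0 + 1 * a₁ 1) else (if m = 2 then (1 * a₁ 0) else (if m = 3 then (0) else (if m = 4 then (0) else (if m = 5 then (0) else (if m = 6 then (0) else (if m = 7 then (0) else (0)))))))))) m * (X ω * Y ω) ^ m)
        = fun ω => ∑ j : Fin 4, (a₀ j + a₁ j * (X ω * Y ω))
          * iteratedDeriv (j : ℕ) (fun x : ℝ => x ^ 1) (X ω * Y ω) from funext fun ω => by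
      simp only [Fin.sum_univ_four, show ((0 : Fin 4) : ℕ) = 0 from rfl, show ((1 : Fin 4) : ℕ) = 1 from rfl, show ((2 : Fin 4) : ℕ) = 2 from rfl, show ((3 : Fin 4) : ℕ) = 3 from rfl, aux_iteratedDeriv_pow,
        Finset.sum_range_succ, Finset.sum_range_zero]
      norm_num [show Nat.descFactorial 1 0 = 1 from rfl, show Nat.descFactorial 1 1 = 1 from rfl, show Nat.descFactorial 1 2 = 0 from rfl, show Nat.descFactorial 1 3 = 0 from rfl]
      try ring]
    exact h 1 (by norm_num)
  simp only [Finset.sum_range_succ, Finset.sum_range_zero,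
    hM0, hM1, hM2, hM3, hM4, hM5, hM6, hM7, hM8] at e1
  norm_num at e1
  have e2 : ∑ m ∈ Finset.range 9,
      (fun m : ℕ => (if m = 0 then (2 * a₀ 2) else (if m = 1 then (2 * a₀ 1 + 2 * a₁ 2) else (if m = 2 then (1 * a₀ 0 + 2 * a₁ 1) else (if m = 3 then (1 * a₁ 0) else (if m = 4 then (0) else (if m = 5 then (0) else (if m = 6 then (0) else (if m = 7 then (0) else (0)))))))))) m * (∫ ω, (X ω * Y ω) ^ m ∂P) = 0 := by
    rw [← aux_integral_poly P (fun ω => X ω * Y ω) hIZ _ 9]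
    rw [show (fun ω => ∑ m ∈ Finset.range 9,
        (fun m : ℕ => (if m = 0 then (2 * a₀ 2) else (if m = 1 then (2 * a₀ 1 + 2 * a₁ 2) else (if m = 2 then (1 * a₀ 0 + 2 * a₁ 1) else (if m = 3 then (1 * a₁ 0) else (if m = 4 then (0) else (if m = 5 then (0) else (if m = 6 then (0) else (if m = 7 then (0) else (0)))))))))) m * (X ω * Y ω) ^ m)
        = fun ω => ∑ j : Fin 4, (a₀ j + a₁ j * (X ω * Y ω))
          * iteratedDeriv (j : ℕ) (fun x : ℝ => x ^ 2) (X ω * Y ω) from funext fun ω => by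
      simp only [Fin.sum_univ_four, show ((0 : Fin 4) : ℕ) = 0 from rfl, show ((1 : Fin 4) : ℕ) = 1 from rfl, show ((2 : Fin 4) : ℕ) = 2 from rfl, show ((3 : Fin 4) : ℕ) = 3 from rfl, aux_iteratedDeriv_pow,
        Finset.sum_range_succ, Finset.sum_range_zero]
      norm_num [show Nat.descFactorial 2 0 = 1 from rfl, show Nat.descFactorial 2 1 = 2 from rfl, show Nat.descFactorial 2 2 = 2 from rfl, show Nat.descFactorial 2 3 = 0 from rfl]
      try ring]
    exact h 2 (by norm_num)
  simp only [Finset.sum_range_succ, Finset.sum_range_zero,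
    hM0, hM1, hM2, hM3, hM4, hM5, hM6, hM7, hM8] at e2
  norm_num at e2
  have e3 : ∑ m ∈ Finset.range 9,
      (fun m : ℕ => (if m = 0 then (6 * a₀ 3) else (if m = 1 then (6 * a₀ 2 + 6 * a₁ 3) else (if m = 2 then (3 * a₀ 1 + 6 * a₁ 2) else (if m = 3 then (1 * a₀ 0 + 3 * a₁ 1) else (if m = 4 then (1 * a₁ 0) else (if m = 5 then (0) else (if m = 6 then (0) else (if m = 7 then (0) else (0)))))))))) m * (∫ ω, (X ω * Y ω) ^ m ∂P) = 0 := by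
    rw [← aux_integral_poly P (fun ω => X ω * Y ω) hIZ _ 9]
    rw [show (fun ω => ∑ m ∈ Finset.range 9,
        (fun m : ℕ => (if m = 0 then (6 * a₀ 3) else (if m = 1 then (6 * a₀ 2 + 6 * a₁ 3) else (if m = 2 then (3 * a₀ 1 + 6 * a₁ 2) else (if m = 3 then (1 * a₀ 0 + 3 * a₁ 1) else (if m = 4 then (1 * a₁ 0) else (if m = 5 then (0) else (if m = 6 then (0) else (if m = 7 then (0) else (0)))))))))) m * (X ω * Y ω) ^ m)
        = fun ω => ∑ j : Fin 4, (a₀ j + a₁ j * (X ω * Y ω))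
          * iteratedDeriv (j : ℕ) (fun x : ℝ => x ^ 3) (X ω * Y ω) from funext fun ω => by
      simp only [Fin.sum_univ_four, show ((0 : Fin 4) : ℕ) = 0 from rfl, show ((1 : Fin 4) : ℕ) = 1 from rfl, show ((2 : Fin 4) : ℕ) = 2 from rfl, show ((3 : Fin 4) : ℕ) = 3 from rfl, aux_iteratedDeriv_pow,
        Finset.sum_range_succ, Finset.sum_range_zero]
      norm_num [show Nat.descFactorial 3 0 = 1 from rfl, show Nat.descFactorial 3 1 = 3 from rfl, show Nat.descFactorial 3 2 = 6 from rfl, show Nat.descFactorial 3 3 = 6 from rfl]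
      try ring]
    exact h 3 (by norm_num)
  simp only [Finset.sum_range_succ, Finset.sum_range_zero,
    hM0, hM1, hM2, hM3, hM4, hM5, hM6, hM7, hM8] at e3
  norm_num at e3
  have e4 : ∑ m ∈ Finset.range 9,
      (fun m : ℕ => (if m = 0 then (0) else (if m = 1 then (24 * a₀ 3) else (if m = 2 then (12 * a₀ 2 + 24 * a₁ 3) else (if m = 3 then (4 * a₀ 1 + 12 * a₁ 2) else (if m = 4 then (1 * a₀ 0 + 4 * a₁ 1) else (if m = 5 then (1 * a₁ 0) else (if m = 6 then (0) else (if m = 7 then (0) else (0)))))))))) m * (∫ ω, (X ω * Y ω) ^ m ∂P) = 0 := by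
    rw [← aux_integral_poly P (fun ω => X ω * Y ω) hIZ _ 9]
    rw [show (fun ω => ∑ m ∈ Finset.range 9,
        (fun m : ℕ => (if m = 0 then (0) else (if m = 1 then (24 * a₀ 3) else (if m = 2 then (12 * a₀ 2 + 24 * a₁ 3) else (if m = 3 then (4 * a₀ 1 + 12 * a₁ 2) else (if m = 4 then (1 * a₀ 0 + 4 * a₁ 1) else (if m = 5 then (1 * a₁ 0) else (if m = 6 then (0) else (if m = 7 then (0) else (0)))))))))) m * (X ω * Y ω) ^ m)
        = fun ω => ∑ j : Fin 4, (a₀ j + a₁ j * (X ω * Y ω))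
          * iteratedDeriv (j : ℕ) (fun x : ℝ => x ^ 4) (X ω * Y ω) from funext fun ω => by
      simp only [Fin.sum_univ_four, show ((0 : Fin 4) : ℕ) = 0 from rfl, show ((1 : Fin 4) : ℕ) = 1 from rfl, show ((2 : Fin 4) : ℕ) = 2 from rfl, show ((3 : Fin 4) : ℕ) = 3 from rfl, aux_iteratedDeriv_pow,
        Finset.sum_range_succ, Finset.sum_range_zero]
      norm_num [show Nat.descFactorial 4 0 = 1 from rfl, show Nat.descFactorial 4 1 = 4 from rfl, show Nat.descFactorial 4 2 = 12 from rfl, show Nat.descFactorial 4 3 = 24 from rfl]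
      try ring]
    exact h 4 (by norm_num)
  simp only [Finset.sum_range_succ, Finset.sum_range_zero,
    hM0, hM1, hM2, hM3, hM4, hM5, hM6, hM7, hM8] at e4
  norm_num at e4
  have e5 : ∑ m ∈ Finset.range 9,
      (fun m : ℕ => (if m = 0 then (0) else (if m = 1 then (0) else (if m = 2 then (60 * a₀ 3) else (if m = 3 then (20 * a₀ 2 + 60 * a₁ 3) else (if m = 4 then (5 * a₀ 1 + 20 * a₁ 2) else (if m = 5 then (1 * a₀ 0 + 5 * a₁ 1) else (if m = 6 then (1 * a₁ 0) else (if m = 7 then (0) else (0)))))))))) m * (∫ ω, (X ω * Y ω) ^ m ∂P) = 0 := by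
    rw [← aux_integral_poly P (fun ω => X ω * Y ω) hIZ _ 9]
    rw [show (fun ω => ∑ m ∈ Finset.range 9,
        (fun m : ℕ => (if m = 0 then (0) else (if m = 1 then (0) else (if m = 2 then (60 * a₀ 3) else (if m = 3 then (20 * a₀ 2 + 60 * a₁ 3) else (if m = 4 then (5 * a₀ 1 + 20 * a₁ 2) else (if m = 5 then (1 * a₀ 0 + 5 * a₁ 1) else (if m = 6 then (1 * a₁ 0) else (if m = 7 then (0) else (0)))))))))) m * (X ω * Y ω) ^ m)
        = fun ω => ∑ j : Fin 4, (a₀ j + a₁ j * (X ω * Y ω))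
          * iteratedDeriv (j : ℕ) (fun x : ℝ => x ^ 5) (X ω * Y ω) from funext fun ω => by
      simp only [Fin.sum_univ_four, show ((0 : Fin 4) : ℕ) = 0 from rfl, show ((1 : Fin 4) : ℕ) = 1 from rfl, show ((2 : Fin 4) : ℕ) = 2 from rfl, show ((3 : Fin 4) : ℕ) = 3 from rfl, aux_iteratedDeriv_pow,
        Finset.sum_range_succ, Finset.sum_range_zero]
      norm_num [show Nat.descFactorial 5 0 = 1 from rfl, show Nat.descFactorial 5 1 = 5 from rfl, show Nat.descFactorial 5 2 = 20 from rfl, show Nat.descFactorial 5 3 = 60 from rfl]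
      try ring]
    exact h 5 (by norm_num)
  simp only [Finset.sum_range_succ, Finset.sum_range_zero,
    hM0, hM1, hM2, hM3, hM4, hM5, hM6, hM7, hM8] at e5
  norm_num at e5
  have e6 : ∑ m ∈ Finset.range 9,
      (fun m : ℕ => (if m = 0 then (0) else (if m = 1 then (0) else (if m = 2 then (0) else (if m = 3 then (120 * a₀ 3) else (if m = 4 then (30 * a₀ 2 + 120 * a₁ 3) else (if m = 5 then (6 * a₀ 1 + 30 * a₁ 2) else (if m = 6 then (1 * a₀ 0 + 6 * a₁ 1) else (if m = 7 then (1 * a₁ 0) else (0)))))))))) m * (∫ ω, (X ω * Y ω) ^ m ∂P) = 0 := by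
    rw [← aux_integral_poly P (fun ω => X ω * Y ω) hIZ _ 9]
    rw [show (fun ω => ∑ m ∈ Finset.range 9,
        (fun m : ℕ => (if m = 0 then (0) else (if m = 1 then (0) else (if m = 2 then (0) else (if m = 3 then (120 * a₀ 3) else (if m = 4 then (30 * a₀ 2 + 120 * a₁ 3) else (if m = 5 then (6 * a₀ 1 + 30 * a₁ 2) else (if m = 6 then (1 * a₀ 0 + 6 * a₁ 1) else (if m = 7 then (1 * a₁ 0) else (0)))))))))) m * (X ω * Y ω) ^ m)
        = fun ω => ∑ j : Fin 4, (a₀ j + a₁ j * (X ω * Y ω))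
          * iteratedDeriv (j : ℕ) (fun x : ℝ => x ^ 6) (X ω * Y ω) from funext fun ω => by
      simp only [Fin.sum_univ_four, show ((0 : Fin 4) : ℕ) = 0 from rfl, show ((1 : Fin 4) : ℕ) = 1 from rfl, show ((2 : Fin 4) : ℕ) = 2 from rfl, show ((3 : Fin 4) : ℕ) = 3 from rfl, aux_iteratedDeriv_pow,
        Finset.sum_range_succ, Finset.sum_range_zero]
      norm_num [show Nat.descFactorial 6 0 = 1 from rfl, show Nat.descFactorial 6 1 = 6 from rfl, show Nat.descFactorial 6 2 = 30 from rfl, show Nat.descFactorial 6 3 = 120 from rfl]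
      try ring]
    exact h 6 (by norm_num)
  simp only [Finset.sum_range_succ, Finset.sum_range_zero,
    hM0, hM1, hM2, hM3, hM4, hM5, hM6, hM7, hM8] at e6
  norm_num at e6
  have e7 : ∑ m ∈ Finset.range 9,
      (fun m : ℕ => (if m = 0 then (0) else (if m = 1 then (0) else (if m = 2 then (0) else (if m = 3 then (0) else (if m = 4 then (210 * a₀ 3) else (if m = 5 then (42 * a₀ 2 + 210 * a₁ 3) else (if m = 6 then (7 * a₀ 1 + 42 * a₁ 2) else (if m = 7 then (1 * a₀ 0 + 7 * a₁ 1) else (1 * a₁ 0)))))))))) m * (∫ ω, (X ω * Y ω) ^ m ∂P) = 0 := by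
    rw [← aux_integral_poly P (fun ω => X ω * Y ω) hIZ _ 9]
    rw [show (fun ω => ∑ m ∈ Finset.range 9,
        (fun m : ℕ => (if m = 0 then (0) else (if m = 1 then (0) else (if m = 2 then (0) else (if m = 3 then (0) else (if m = 4 then (210 * a₀ 3) else (if m = 5 then (42 * a₀ 2 + 210 * a₁ 3) else (if m = 6 then (7 * a₀ 1 + 42 * a₁ 2) else (if m = 7 then (1 * a₀ 0 + 7 * a₁ 1) else (1 * a₁ 0)))))))))) m * (X ω * Y ω) ^ m)
        = fun ω => ∑ j : Fin 4, (a₀ j + a₁ j * (X ω * Y ω))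
          * iteratedDeriv (j : ℕ) (fun x : ℝ => x ^ 7) (X ω * Y ω) from funext fun ω => by
      simp only [Fin.sum_univ_four, show ((0 : Fin 4) : ℕ) = 0 from rfl, show ((1 : Fin 4) : ℕ) = 1 from rfl, show ((2 : Fin 4) : ℕ) = 2 from rfl, show ((3 : Fin 4) : ℕ) = 3 from rfl, aux_iteratedDeriv_pow,
        Finset.sum_range_succ, Finset.sum_range_zero]
      norm_num [show Nat.descFactorial 7 0 = 1 from rfl, show Nat.descFactorial 7 1 = 7 from rfl, show Nat.descFactorial 7 2 = 42 from rfl, show Nat.descFactorial 7 3 = 210 from rfl]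
      try ring]
    exact h 7 (by norm_num)
  simp only [Finset.sum_range_succ, Finset.sum_range_zero,
    hM0, hM1, hM2, hM3, hM4, hM5, hM6, hM7, hM8] at e7
  norm_num at e7
  have A0 : a₀ 0 = 0 := by linarith
  have A1 : a₀ 1 = 0 := by linarith
  have A2 : a₀ 2 = 0 := by linarith
  have A3 : a₀ 3 = 0 := by linarith
  have B0 : a₁ 0 = 0 := by linarith
  have B1 : a₁ 1 = 0 := by linarith
  have B2 : a₁ 2 = 0 := by linarith
  have B3 : a₁ 3 = 0 := by linarith
  intro j
  fin_cases j
  · exact ⟨A0, B0⟩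
  · exact ⟨A1, B1⟩
  · exact ⟨A2, B2⟩
  · exact ⟨A3, B3⟩
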